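/- Let 0 < α < 2 and 0 ≤ λ satisfy λ < 2α and λ < 2. Then there exists a constant C > 0 such that for every x ∈ T²: ∫_{T²} ∫_{T²} |y − z|^{−λ} · |x − y|^{α−2} · |x − z|^{α−2} dy dz ≤ C, where the integrals are with respect to the Haar (Lebesgue) measure on T². -/

import Mathlib

open scoped Real ENNReal
open MeasureTheory Set

noncomputable def enorm2 (x : ℝ × ℝ) : ℝ := Real.sqrt (x.1 ^ 2 + x.2 ^ 2)

noncomputable def torusNorm2 (x : ℝ × ℝ) : ℝ :=
  ⨅ m : ℤ × ℤ, enorm2 (x.1 - 2 * π * (m.1 : ℝ), x.2 - 2 * π * (m.2 : ℝ))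

noncomputable def torusDist2 (x y : ℝ × ℝ) : ℝ := torusNorm2 (x.1 - y.1, x.2 - y.2)

def torusBox : Set (ℝ × ℝ) := Set.Ico (-π) π ×ˢ Set.Ico (-π) π

lemma enorm2_nonneg (x : ℝ × ℝ) : 0 ≤ enorm2 x := Real.sqrt_nonneg _

lemma enorm2_eq_complex (x : ℝ × ℝ) : enorm2 x = ‖(⟨x.1, x.2⟩ : ℂ)‖ := by
  rw [Complex.norm_def, Complex.normSq_mk]
  simp [enorm2, sq]

lemma enorm2_add_le (a b : ℝ × ℝ) : enorm2 (a.1 + b.1, a.2 + b.2) ≤ enorm2 a + enorm2 b := by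
  simp only [enorm2_eq_complex]
  exact norm_add_le (⟨a.1, a.2⟩ : ℂ) ⟨b.1, b.2⟩

lemma abs_fst_le_enorm2 (x : ℝ × ℝ) : |x.1| ≤ enorm2 x := by
  rw [enorm2_eq_complex]; exact Complex.abs_re_le_norm ⟨x.1, x.2⟩

lemma abs_snd_le_enorm2 (x : ℝ × ℝ) : |x.2| ≤ enorm2 x := by
  rw [enorm2_eq_complex]; exact Complex.abs_im_le_norm ⟨x.1, x.2⟩

lemma enorm2_le_sum (x : ℝ × ℝ) : enorm2 x ≤ |x.1| + |x.2| := by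
  rw [enorm2]
  have h : x.1 ^ 2 + x.2 ^ 2 ≤ (|x.1| + |x.2|) ^ 2 := by
    have h1 : (0:ℝ) ≤ |x.1| * |x.2| := by positivity
    have := sq_abs x.1; have := sq_abs x.2
    nlinarith
  calc Real.sqrt (x.1 ^ 2 + x.2 ^ 2) ≤ Real.sqrt ((|x.1| + |x.2|) ^ 2) := Real.sqrt_le_sqrt h
    _ = |x.1| + |x.2| := Real.sqrt_sq (by positivity)

lemma torusNorm2_bddBelow (x : ℝ × ℝ) :
    BddBelow (Set.range fun m : ℤ × ℤ => enorm2 (x.1 - 2 * π * (m.1 : ℝ), x.2 - 2 * π * (m.2 : ℝ))) :=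
  ⟨0, by rintro y ⟨m, rfl⟩; exact enorm2_nonneg _⟩

lemma torusNorm2_nonneg (x : ℝ × ℝ) : 0 ≤ torusNorm2 x :=
  le_ciInf fun m => enorm2_nonneg _

lemma torusNorm2_le (x : ℝ × ℝ) (m : ℤ × ℤ) :
    torusNorm2 x ≤ enorm2 (x.1 - 2 * π * (m.1 : ℝ), x.2 - 2 * π * (m.2 : ℝ)) :=
  ciInf_le (torusNorm2_bddBelow x) m

lemma torusNorm2_le_enorm2 (x : ℝ × ℝ) : torusNorm2 x ≤ enorm2 x := by
  have := torusNorm2_le x 0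
  simpa using this

lemma torusNorm2_add_le (u v : ℝ × ℝ) :
    torusNorm2 (u.1 + v.1, u.2 + v.2) ≤ torusNorm2 u + torusNorm2 v := by
  rw [torusNorm2, torusNorm2]
  refine le_ciInf_add_ciInf fun m n => ?_
  calc torusNorm2 (u.1 + v.1, u.2 + v.2)
      ≤ enorm2 ((u.1 + v.1) - 2 * π * ((m.1 + n.1 : ℤ) : ℝ),
          (u.2 + v.2) - 2 * π * ((m.2 + n.2 : ℤ) : ℝ)) := torusNorm2_le _ (m + n)
    _ ≤ enorm2 (u.1 - 2 * π * (m.1 : ℝ), u.2 - 2 * π * (m.2 : ℝ))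
        + enorm2 (v.1 - 2 * π * (n.1 : ℝ), v.2 - 2 * π * (n.2 : ℝ)) := by
        have := enorm2_add_le (u.1 - 2 * π * (m.1 : ℝ), u.2 - 2 * π * (m.2 : ℝ))
          (v.1 - 2 * π * (n.1 : ℝ), v.2 - 2 * π * (n.2 : ℝ))
        push_cast
        convert this using 3 <;> push_cast <;> ring

lemma torusNorm2_neg (x : ℝ × ℝ) : torusNorm2 (-x.1, -x.2) = torusNorm2 x := by
  have key : ∀ y : ℝ × ℝ, torusNorm2 (-y.1, -y.2) ≤ torusNorm2 y := by
    intro y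
    refine le_ciInf fun m => ?_
    have := torusNorm2_le (-y.1, -y.2) (-m)
    refine le_trans this (le_of_eq ?_)
    rw [enorm2, enorm2]
    simp only [Prod.fst_neg, Prod.snd_neg, Int.cast_neg]
    ring_nf
  refine le_antisymm (key x) ?_
  have := key (-x.1, -x.2); simpa using this

lemma torusDist2_symm (x y : ℝ × ℝ) : torusDist2 x y = torusDist2 y x := by
  rw [torusDist2, torusDist2]
  have := torusNorm2_neg (y.1 - x.1, y.2 - x.2)
  simp only [neg_sub] at this
  exact this

lemma torusDist2_nonneg (x y : ℝ × ℝ) : 0 ≤ torusDist2 x y := torusNorm2_nonneg _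

lemma torusDist2_triangle (x y z : ℝ × ℝ) :
    torusDist2 y z ≤ torusDist2 x y + torusDist2 x z := by
  rw [torusDist2_symm x y]
  have := torusNorm2_add_le (y.1 - x.1, y.2 - x.2) (x.1 - z.1, x.2 - z.2)
  simpa [torusDist2] using this

noncomputable def latD (t : ℝ) : ℝ := ⨅ m : ℤ, |t - 2 * π * (m : ℝ)|

lemma latD_bddBelow (t : ℝ) : BddBelow (Set.range fun m : ℤ => |t - 2 * π * (m : ℝ)|) :=
  ⟨0, by rintro y ⟨m, rfl⟩; exact abs_nonneg _⟩

lemma latD_nonneg (t : ℝ) : 0 ≤ latD t := le_ciInf fun m => abs_nonneg _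

lemma latD_le (t : ℝ) (m : ℤ) : latD t ≤ |t - 2 * π * (m : ℝ)| := ciInf_le (latD_bddBelow t) m

lemma latD_fst_le_torusNorm2 (x : ℝ × ℝ) : latD x.1 ≤ torusNorm2 x :=
  le_ciInf fun m => (latD_le x.1 m.1).trans (abs_fst_le_enorm2 (x.1 - 2 * π * (m.1 : ℝ), x.2 - 2 * π * (m.2 : ℝ)))

lemma latD_snd_le_torusNorm2 (x : ℝ × ℝ) : latD x.2 ≤ torusNorm2 x :=
  le_ciInf fun m => (latD_le x.2 m.2).trans (abs_snd_le_enorm2 (x.1 - 2 * π * (m.1 : ℝ), x.2 - 2 * π * (m.2 : ℝ)))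

lemma sqrt_latD_le_torusNorm2 (x : ℝ × ℝ) :
    Real.sqrt (latD x.1 * latD x.2) ≤ torusNorm2 x := by
  calc Real.sqrt (latD x.1 * latD x.2)
      ≤ Real.sqrt (torusNorm2 x * torusNorm2 x) :=
        Real.sqrt_le_sqrt (mul_le_mul (latD_fst_le_torusNorm2 x) (latD_snd_le_torusNorm2 x)
          (latD_nonneg _) (torusNorm2_nonneg _))
    _ = torusNorm2 x := by rw [← sq, Real.sqrt_sq (torusNorm2_nonneg x)]

lemma latD_sub_le (u v : ℝ) : latD u ≤ latD v + |u - v| := by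
  have h : ∀ m : ℤ, latD u - |u - v| ≤ |v - 2 * π * (m : ℝ)| := by
    intro m
    have h1 : latD u ≤ |u - 2 * π * (m : ℝ)| := latD_le u m
    have h2 : |u - 2 * π * (m : ℝ)| ≤ |v - 2 * π * (m : ℝ)| + |u - v| := by
      have := abs_add_le (v - 2 * π * (m : ℝ)) (u - v)
      simpa [show v - 2 * π * (m : ℝ) + (u - v) = u - 2 * π * (m : ℝ) by ring] using this
    linarith
  have h2 : latD u - |u - v| ≤ latD v := le_ciInf h
  linarith

lemma continuous_latD : Continuous latD := by
  have : LipschitzWith 1 latD := by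
    refine LipschitzWith.of_dist_le_mul fun u v => ?_
    rw [Real.dist_eq, Real.dist_eq, NNReal.coe_one, one_mul]
    rw [abs_sub_le_iff]
    constructor
    · have := latD_sub_le u v; linarith
    · have := latD_sub_le v u; rw [abs_sub_comm] at this; linarith
  exact this.continuous

lemma continuous_torusNorm2 : Continuous torusNorm2 := by
  have key : ∀ u v : ℝ × ℝ, torusNorm2 u ≤ torusNorm2 v + enorm2 (u.1 - v.1, u.2 - v.2) := by
    intro u v
    have h1 : torusNorm2 u ≤ torusNorm2 v + torusNorm2 (u.1 - v.1, u.2 - v.2) := by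
      simpa using torusNorm2_add_le v (u.1 - v.1, u.2 - v.2)
    have h2 := torusNorm2_le_enorm2 (u.1 - v.1, u.2 - v.2)
    linarith
  have : LipschitzWith 2 torusNorm2 := by
    refine LipschitzWith.of_dist_le_mul fun u v => ?_
    have hd : enorm2 (u.1 - v.1, u.2 - v.2) ≤ 2 * dist u v := by
      have h1 : enorm2 (u.1 - v.1, u.2 - v.2) ≤ |u.1 - v.1| + |u.2 - v.2| := enorm2_le_sum _
      have h2 : |u.1 - v.1| ≤ dist u v := by
        rw [Prod.dist_eq]; exact le_max_of_le_left (by rw [Real.dist_eq])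
      have h3 : |u.2 - v.2| ≤ dist u v := by
        rw [Prod.dist_eq]; exact le_max_of_le_right (by rw [Real.dist_eq])
      linarith
    rw [Real.dist_eq, abs_sub_le_iff]
    have e1 := key u v
    have e2 := key v u
    have he : enorm2 (v.1 - u.1, v.2 - u.2) = enorm2 (u.1 - v.1, u.2 - v.2) := by
      rw [enorm2, enorm2]; ring_nf
    rw [he] at e2
    push_cast
    constructor <;> linarith
  exact this.continuous

lemma continuous_torusDist2 : Continuous fun p : (ℝ × ℝ) × (ℝ × ℝ) => torusDist2 p.1 p.2 := by
  unfold torusDist2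
  apply continuous_torusNorm2.comp
  fun_prop

lemma ennrpow_anti {a b : ℝ≥0∞} (h : a ≤ b) {t : ℝ} (ht : t ≤ 0) : b ^ t ≤ a ^ t := by
  rw [← neg_neg t, ENNReal.rpow_neg b, ENNReal.rpow_neg a]
  exact ENNReal.inv_le_inv.mpr (ENNReal.rpow_le_rpow h (by linarith))

lemma M_ne_top (τ : ℝ) (hτ0 : 0 ≤ τ) (hτ1 : τ < 1) :
    (∫⁻ x in Set.Icc (-(4*π)) (4*π), ENNReal.ofReal |x| ^ (-τ)) ≠ ∞ := by
  have hP : (∫⁻ x in Set.Icc 0 (4*π), ENNReal.ofReal |x| ^ (-τ)) ≠ ∞ := by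
    have hsub : Set.Icc (0:ℝ) (4*π) ⊆ {0} ∪ Set.Ioc 0 (4*π) := by
      intro x hx
      rcases eq_or_lt_of_le hx.1 with h | h
      · exact Or.inl (by simp [← h])
      · exact Or.inr ⟨h, hx.2⟩
    refine ne_top_of_le_ne_top ?_ ((lintegral_mono_set hsub).trans (lintegral_union_le _ _ _))
    have h0 : (∫⁻ x in ({0} : Set ℝ), ENNReal.ofReal |x| ^ (-τ)) = 0 := by
      apply setLIntegral_measure_zero
      simp
    rw [h0, zero_add]
    have heq : (∫⁻ x in Set.Ioc (0:ℝ) (4*π), ENNReal.ofReal |x| ^ (-τ))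
        = ∫⁻ x in Set.Ioc (0:ℝ) (4*π), ENNReal.ofReal (x ^ (-τ)) := by
      refine setLIntegral_congr_fun measurableSet_Ioc (fun x hx => ?_)
      simp only [abs_of_pos hx.1, ENNReal.ofReal_rpow_of_pos hx.1]
    rw [heq]
    have hint : IntegrableOn (fun x : ℝ => x ^ (-τ)) (Set.Ioc 0 (4*π)) volume :=
      (intervalIntegral.intervalIntegrable_rpow' (by linarith)).1
    exact (Integrable.lintegral_lt_top hint).ne
  have hneg : (∫⁻ x in Set.Icc (-(4*π)) (0:ℝ), ENNReal.ofReal |x| ^ (-τ))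
      = ∫⁻ x in Set.Icc (0:ℝ) (4*π), ENNReal.ofReal |x| ^ (-τ) := by
    have hmp : MeasurePreserving (fun x : ℝ => -x) volume volume :=
      Measure.measurePreserving_neg volume
    have := hmp.setLIntegral_comp_preimage_emb (MeasurableEquiv.neg ℝ).measurableEmbedding
      (fun y => ENNReal.ofReal |y| ^ (-τ)) (Set.Icc (-(4*π)) 0)
    have hpre : (fun x : ℝ => -x) ⁻¹' Set.Icc (-(4*π)) 0 = Set.Icc 0 (4*π) := by
      ext x; simp only [Set.mem_preimage, Set.mem_Icc]; constructor <;> rintro ⟨h1, h2⟩ <;> constructor <;> linarith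
    rw [hpre] at this
    simp only [abs_neg] at this
    exact this.symm
  have hsplit : Set.Icc (-(4*π)) (4*π) ⊆ Set.Icc (-(4*π)) 0 ∪ Set.Icc 0 (4*π) := by
    intro x hx
    rcases le_total x 0 with h | h
    · exact Or.inl ⟨hx.1, h⟩
    · exact Or.inr ⟨h, hx.2⟩
  refine ne_top_of_le_ne_top ?_ ((lintegral_mono_set hsplit).trans (lintegral_union_le _ _ _))
  rw [hneg]
  exact ENNReal.add_ne_top.mpr ⟨hP, hP⟩

lemma oneD (τ : ℝ) (hτ0 : 0 ≤ τ) (hτ1 : τ < 1) :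
    ∃ K : ℝ≥0∞, K ≠ ∞ ∧ ∀ c : ℝ,
      (∫⁻ v in Set.Ico (-π) π, ENNReal.ofReal (latD (c - v)) ^ (-τ)) ≤ K := by
  set M := ∫⁻ x in Set.Icc (-(4*π)) (4*π), ENNReal.ofReal |x| ^ (-τ) with hM
  have hMne := M_ne_top τ hτ0 hτ1
  refine ⟨M + M + M, by finiteness, fun c => ?_⟩
  set k : ℤ := round (c / (2 * π)) with hk
  have hπ : (0:ℝ) < π := Real.pi_pos
  have hkc : |c - 2 * π * (k : ℝ)| ≤ π := by
    have h1 : |c / (2 * π) - (k : ℝ)| ≤ 1 / 2 := by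
      rw [hk]; exact abs_sub_round _
    have h2 : c - 2 * π * (k : ℝ) = 2 * π * (c / (2 * π) - (k : ℝ)) := by
      field_simp
    rw [h2, abs_mul, abs_of_pos (by linarith : (0:ℝ) < 2 * π)]
    nlinarith [abs_nonneg (c / (2 * π) - (k : ℝ))]
  -- the three shifted kernels
  set g : ℤ → ℝ → ℝ≥0∞ := fun j v => ENNReal.ofReal |c - v - 2 * π * ((k + j : ℤ) : ℝ)| ^ (-τ)
    with hg
  -- pointwise bound
  have hpt : ∀ v ∈ Set.Ico (-π) π,
      ENNReal.ofReal (latD (c - v)) ^ (-τ) ≤ g (-1) v + g 0 v + g 1 v := by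
    intro v hv
    have hv' : |v| ≤ π := by
      rw [abs_le]; exact ⟨hv.1, hv.2.le⟩
    set t := c - v with ht
    have htk : |t - 2 * π * (k : ℝ)| ≤ 2 * π := by
      have : t - 2 * π * (k : ℝ) = (c - 2 * π * (k : ℝ)) + (-v) := by rw [ht]; ring
      rw [this]
      calc |(c - 2 * π * (k : ℝ)) + (-v)| ≤ |c - 2 * π * (k : ℝ)| + |(-v)| := abs_add_le _ _
        _ ≤ π + π := by rw [abs_neg]; exact add_le_add hkc hv'
        _ = 2 * π := by ring
    set a : ℤ → ℝ := fun j => |t - 2 * π * ((k + j : ℤ) : ℝ)| with ha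
    set m3 := min (a (-1)) (min (a 0) (a 1)) with hm3
    have hmin : m3 ≤ latD t := by
      refine le_ciInf fun m => ?_
      by_cases hcase : m = k - 1 ∨ m = k ∨ m = k + 1
      · rcases hcase with h | h | h
        · refine (min_le_left _ _).trans (le_of_eq ?_)
          rw [ha]; norm_num [h]; ring_nf
        · refine ((min_le_right _ _).trans (min_le_left _ _)).trans (le_of_eq ?_)
          rw [ha]; norm_num [h]
        · refine ((min_le_right _ _).trans (min_le_right _ _)).trans (le_of_eq ?_)
          rw [ha]; norm_num [h]
      · push_neg at hcase
        have hfar : (2:ℝ) ≤ |(m : ℝ) - (k : ℝ)| := by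
          have hmk : m ≤ k - 2 ∨ k + 2 ≤ m := by omega
          rcases hmk with h | h
          · have : (m : ℝ) ≤ (k : ℝ) - 2 := by exact_mod_cast h
            rw [abs_of_nonpos (by linarith)]; linarith
          · have : (k : ℝ) + 2 ≤ (m : ℝ) := by exact_mod_cast h
            rw [abs_of_nonneg (by linarith)]; linarith
        have htri : |2 * π * ((m : ℝ) - (k : ℝ))| ≤ |t - 2 * π * (k : ℝ)| + |t - 2 * π * (m : ℝ)| := by
          have : 2 * π * ((m : ℝ) - (k : ℝ)) = (t - 2 * π * (k : ℝ)) - (t - 2 * π * (m : ℝ)) := by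
            ring
          rw [this]
          exact abs_sub _ _
        have habs : |2 * π * ((m : ℝ) - (k : ℝ))| = 2 * π * |(m : ℝ) - (k : ℝ)| := by
          rw [abs_mul, abs_of_pos (by linarith : (0:ℝ) < 2 * π)]
        have hbig : 2 * π ≤ |t - 2 * π * (m : ℝ)| := by
          nlinarith
        have hm30 : m3 ≤ a 0 := (min_le_right _ _).trans (min_le_left _ _)
        have ha0 : a 0 = |t - 2 * π * (k : ℝ)| := by rw [ha]; norm_num
        rw [ha0] at hm30
        linarith
    have h1 : ENNReal.ofReal (latD t) ^ (-τ) ≤ ENNReal.ofReal m3 ^ (-τ) :=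
      ennrpow_anti (ENNReal.ofReal_le_ofReal hmin) (by linarith)
    refine h1.trans ?_
    rcases min_cases (a (-1)) (min (a 0) (a 1)) with ⟨he, _⟩ | ⟨he, _⟩
    · rw [hm3, he]
      calc (ENNReal.ofReal (a (-1))) ^ (-τ) = g (-1) v := by rw [hg, ha]
        _ ≤ g (-1) v + g 0 v + g 1 v := by
          exact le_add_of_le_of_nonneg (le_add_of_le_of_nonneg le_rfl (zero_le)) (zero_le)
    · rw [hm3, he]
      rcases min_cases (a 0) (a 1) with ⟨he2, _⟩ | ⟨he2, _⟩
      · rw [he2]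
        calc (ENNReal.ofReal (a 0)) ^ (-τ) = g 0 v := by rw [hg, ha]
          _ ≤ g (-1) v + g 0 v + g 1 v := by
            exact le_add_of_le_of_nonneg (le_add_of_nonneg_of_le (zero_le) le_rfl) (zero_le)
      · rw [he2]
        calc (ENNReal.ofReal (a 1)) ^ (-τ) = g 1 v := by rw [hg, ha]
          _ ≤ g (-1) v + g 0 v + g 1 v := le_add_of_nonneg_of_le (zero_le) le_rfl
  -- each shifted kernel integrates to at most M
  have hker : ∀ j : ℤ, |(j : ℝ)| ≤ 1 → (∫⁻ v in Set.Ico (-π) π, g j v) ≤ M := by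
    intro j hj
    set c' : ℝ := c - 2 * π * ((k + j : ℤ) : ℝ) with hc'
    have hgj : ∀ v : ℝ, g j v = ENNReal.ofReal |c' - v| ^ (-τ) := by
      intro v; rw [hg, hc']; ring_nf
    have hc'bound : |c'| ≤ 3 * π := by
      have : c' = (c - 2 * π * (k : ℝ)) - 2 * π * (j : ℝ) := by rw [hc']; push_cast; ring
      rw [this]
      calc |(c - 2 * π * (k : ℝ)) - 2 * π * (j : ℝ)|
          ≤ |c - 2 * π * (k : ℝ)| + |2 * π * (j : ℝ)| := abs_sub _ _
        _ ≤ π + 2 * π := by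
            refine add_le_add hkc ?_
            rw [abs_mul, abs_of_pos (by linarith : (0:ℝ) < 2 * π)]
            nlinarith
        _ = 3 * π := by ring
    have hsub : Set.Ico (-π) π ⊆ Set.Icc (c' - 4 * π) (c' + 4 * π) := by
      intro v hv
      have h1 : |v| ≤ π := by rw [abs_le]; exact ⟨hv.1, hv.2.le⟩
      rw [Set.mem_Icc]
      rw [abs_le] at h1 hc'bound
      constructor <;> linarith
    calc (∫⁻ v in Set.Ico (-π) π, g j v)
        = ∫⁻ v in Set.Ico (-π) π, ENNReal.ofReal |c' - v| ^ (-τ) := by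
          simp only [hgj]
      _ ≤ ∫⁻ v in Set.Icc (c' - 4 * π) (c' + 4 * π), ENNReal.ofReal |c' - v| ^ (-τ) :=
          lintegral_mono_set hsub
      _ = M := by
          have hmp : MeasurePreserving (fun x : ℝ => c' - x) volume volume :=
            Measure.measurePreserving_sub_left volume c'
          have := hmp.setLIntegral_comp_preimage_emb
            (MeasurableEquiv.subLeft c').measurableEmbedding
            (fun y => ENNReal.ofReal |c' - y| ^ (-τ)) (Set.Icc (c' - 4 * π) (c' + 4 * π))
          have hpre : (fun x : ℝ => c' - x) ⁻¹' Set.Icc (c' - 4 * π) (c' + 4 * π)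
              = Set.Icc (-(4*π)) (4*π) := by
            ext x; simp only [Set.mem_preimage, Set.mem_Icc]
            constructor <;> rintro ⟨h1, h2⟩ <;> constructor <;> linarith
          rw [hpre] at this
          rw [← this, hM]
          refine setLIntegral_congr_fun measurableSet_Icc (fun x _ => ?_)
          simp only [show c' - (c' - x) = x by ring]
  -- measurability of the kernels
  have hgm : ∀ j : ℤ, Measurable (g j) := by
    intro j
    apply Measurable.pow_const
    apply ENNReal.measurable_ofReal.comp
    exact ((continuous_const.sub continuous_id).sub continuous_const).abs.measurable
  calc (∫⁻ v in Set.Ico (-π) π, ENNReal.ofReal (latD (c - v)) ^ (-τ))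
      ≤ ∫⁻ v in Set.Ico (-π) π, (g (-1) v + g 0 v + g 1 v) :=
        setLIntegral_mono_ae ((((hgm (-1)).add (hgm 0)).add (hgm 1)).aemeasurable) (ae_of_all _ hpt)
    _ = (∫⁻ v in Set.Ico (-π) π, g (-1) v) + (∫⁻ v in Set.Ico (-π) π, g 0 v)
        + (∫⁻ v in Set.Ico (-π) π, g 1 v) := by
        rw [lintegral_add_right _ (hgm 1), lintegral_add_left (hgm (-1))]
    _ ≤ M + M + M := by
        refine add_le_add (add_le_add (hker (-1) (by norm_num)) (hker 0 (by norm_num)))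
          (hker 1 (by norm_num))

lemma ofReal_sqrt_rpow_neg (a s : ℝ) (ha : 0 ≤ a) (hs : 0 < s) :
    ENNReal.ofReal (Real.sqrt a) ^ (-s) = ENNReal.ofReal a ^ (-(s/2)) := by
  rcases eq_or_lt_of_le ha with h | h
  · rw [← h, Real.sqrt_zero, ENNReal.ofReal_zero, ENNReal.zero_rpow_of_neg (by linarith),
      ENNReal.zero_rpow_of_neg (by linarith)]
  · rw [ENNReal.ofReal_rpow_of_pos (Real.sqrt_pos.mpr h), ENNReal.ofReal_rpow_of_pos h]
    congr 1
    rw [Real.sqrt_eq_rpow, ← Real.rpow_mul ha]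
    · congr 1; ring

lemma twoD (s : ℝ) (hs0 : 0 ≤ s) (hs2 : s < 2) :
    ∃ K : ℝ≥0∞, K ≠ ∞ ∧ ∀ w : ℝ × ℝ,
      (∫⁻ v in torusBox, ENNReal.ofReal (torusDist2 w v) ^ (-s)) ≤ K := by
  have hboxvol : volume torusBox ≠ ∞ := by
    rw [torusBox, Measure.volume_eq_prod, Measure.prod_prod, Real.volume_Ico]
    exact ENNReal.mul_ne_top ENNReal.ofReal_ne_top ENNReal.ofReal_ne_top
  rcases eq_or_lt_of_le hs0 with hs | hs
  · refine ⟨volume torusBox, hboxvol, fun w => ?_⟩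
    simp only [← hs, neg_zero, ENNReal.rpow_zero]
    simp [Measure.restrict_apply_univ]
  obtain ⟨K1, hK1ne, hK1⟩ := oneD (s/2) (by linarith) (by linarith)
  refine ⟨K1 * K1, ENNReal.mul_ne_top hK1ne hK1ne, fun w => ?_⟩
  have hpt : ∀ v : ℝ × ℝ, ENNReal.ofReal (torusDist2 w v) ^ (-s)
      ≤ ENNReal.ofReal (latD (w.1 - v.1)) ^ (-(s/2))
        * ENNReal.ofReal (latD (w.2 - v.2)) ^ (-(s/2)) := by
    intro v
    set a := latD (w.1 - v.1) with hla
    set b := latD (w.2 - v.2) with hlb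
    have ha : 0 ≤ a := latD_nonneg _
    have hb : 0 ≤ b := latD_nonneg _
    have hsq : Real.sqrt (a * b) ≤ torusDist2 w v :=
      sqrt_latD_le_torusNorm2 (w.1 - v.1, w.2 - v.2)
    have h1 : ENNReal.ofReal (torusDist2 w v) ^ (-s)
        ≤ ENNReal.ofReal (Real.sqrt (a * b)) ^ (-s) :=
      ennrpow_anti (ENNReal.ofReal_le_ofReal hsq) (by linarith)
    refine h1.trans (le_of_eq ?_)
    rw [Real.sqrt_mul ha, ENNReal.ofReal_mul (Real.sqrt_nonneg a),
      ENNReal.mul_rpow_of_ne_top ENNReal.ofReal_ne_top ENNReal.ofReal_ne_top,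
      ofReal_sqrt_rpow_neg a s ha hs, ofReal_sqrt_rpow_neg b s hb hs]
  have hmeas1 : Measurable fun v1 : ℝ => ENNReal.ofReal (latD (w.1 - v1)) ^ (-(s/2)) := by
    apply Measurable.pow_const
    exact ENNReal.measurable_ofReal.comp
      (continuous_latD.comp (continuous_const.sub continuous_id)).measurable
  have hmeas2 : Measurable fun v2 : ℝ => ENNReal.ofReal (latD (w.2 - v2)) ^ (-(s/2)) := by
    apply Measurable.pow_const
    exact ENNReal.measurable_ofReal.comp
      (continuous_latD.comp (continuous_const.sub continuous_id)).measurable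
  calc (∫⁻ v in torusBox, ENNReal.ofReal (torusDist2 w v) ^ (-s))
      ≤ ∫⁻ v in torusBox, ENNReal.ofReal (latD (w.1 - v.1)) ^ (-(s/2))
          * ENNReal.ofReal (latD (w.2 - v.2)) ^ (-(s/2)) :=
        lintegral_mono fun v => hpt v
    _ = (∫⁻ v1 in Set.Ico (-π) π, ENNReal.ofReal (latD (w.1 - v1)) ^ (-(s/2)))
        * ∫⁻ v2 in Set.Ico (-π) π, ENNReal.ofReal (latD (w.2 - v2)) ^ (-(s/2)) := by
        rw [torusBox, Measure.volume_eq_prod, ← Measure.prod_restrict]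
        exact lintegral_prod_mul hmeas1.aemeasurable hmeas2.aemeasurable
    _ ≤ K1 * K1 := mul_le_mul' (hK1 w.1) (hK1 w.2)

lemma real_kernel_ineq (β lam θ A B C : ℝ) (hβ : 0 < β) (hθ0 : 0 ≤ θ) (hθ1 : θ ≤ 1)
    (hlam : 0 ≤ lam) (hA : 0 < A) (hB : 0 < B) (hC : 0 < C) (hBC : B ≤ C) (htri : A ≤ B + C) :
    A ^ (-lam) * (B ^ (-β) * C ^ (-β))
      ≤ 2 ^ (β*θ) * (A ^ (-(lam + β*θ)) * B ^ (-(β*(2-θ)))) := by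
  have hA2 : 0 < A / 2 := by linarith
  have hC2 : A / 2 ≤ C := by linarith
  have h2 : C ^ (-(β*θ)) ≤ (A/2) ^ (-(β*θ)) :=
    Real.rpow_le_rpow_of_nonpos hA2 hC2 (by nlinarith)
  have h3 : C ^ (-(β*(1-θ))) ≤ B ^ (-(β*(1-θ))) :=
    Real.rpow_le_rpow_of_nonpos hB hBC (by nlinarith)
  have e1 : C ^ (-β) ≤ (A/2) ^ (-(β*θ)) * B ^ (-(β*(1-θ))) := by
    have hsplit : C ^ (-β) = C ^ (-(β*θ)) * C ^ (-(β*(1-θ))) := by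
      rw [← Real.rpow_add hC]; congr 1; ring
    rw [hsplit]
    exact mul_le_mul h2 h3 (Real.rpow_nonneg hC.le _) (Real.rpow_nonneg hA2.le _)
  have hd : (A/2) ^ (-(β*θ)) = 2 ^ (β*θ) * A ^ (-(β*θ)) := by
    rw [Real.div_rpow hA.le (by norm_num : (0:ℝ) ≤ 2),
      Real.rpow_neg (by norm_num : (0:ℝ) ≤ 2)]
    field_simp
  calc A ^ (-lam) * (B ^ (-β) * C ^ (-β))
      ≤ A ^ (-lam) * (B ^ (-β) * ((A/2) ^ (-(β*θ)) * B ^ (-(β*(1-θ))))) := by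
        refine mul_le_mul_of_nonneg_left ?_ (Real.rpow_nonneg hA.le _)
        exact mul_le_mul_of_nonneg_left e1 (Real.rpow_nonneg hB.le _)
    _ = 2 ^ (β*θ) * (A ^ (-(lam + β*θ)) * B ^ (-(β*(2-θ)))) := by
        rw [hd, show -(lam + β*θ) = -lam + -(β*θ) by ring, Real.rpow_add hA,
          show -(β*(2-θ)) = -β + -(β*(1-θ)) by ring, Real.rpow_add hB]
        ring

lemma enn_kernel_aux (β lam θ A B C : ℝ) (hβ : 0 < β) (hθ0 : 0 ≤ θ) (hθ1 : θ ≤ 1)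
    (hlam : 0 ≤ lam) (hA : 0 ≤ A) (hB : 0 ≤ B) (hC : 0 ≤ C) (hBC : B ≤ C) (htri : A ≤ B + C) :
    ENNReal.ofReal A ^ (-lam) * (ENNReal.ofReal B ^ (-β) * ENNReal.ofReal C ^ (-β))
      ≤ ENNReal.ofReal (2 ^ (β*θ)) *
        (ENNReal.ofReal A ^ (-(lam + β*θ)) * ENNReal.ofReal B ^ (-(β*(2-θ)))) := by
  have hq : 0 < β*(2-θ) := by nlinarith
  have hAfin : ENNReal.ofReal A ≠ ⊤ := ENNReal.ofReal_ne_top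
  have hAne0 : ENNReal.ofReal A ^ (-(lam + β*θ)) ≠ 0 := by
    rw [ne_eq, ENNReal.rpow_eq_zero_iff, not_or, not_and, not_and]
    constructor
    · intro _ hcon; nlinarith
    · intro h _; exact hAfin h
  rcases eq_or_lt_of_le hB with hB0 | hB0
  · -- B = 0 : RHS is ∞
    have : ENNReal.ofReal B ^ (-(β*(2-θ))) = ⊤ := by
      rw [← hB0, ENNReal.ofReal_zero, ENNReal.zero_rpow_of_neg (by linarith)]
    rw [this, ENNReal.mul_top hAne0, ENNReal.mul_top (by
      simp only [ne_eq, ENNReal.ofReal_eq_zero, not_le]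
      positivity)]
    exact le_top
  rcases eq_or_lt_of_le hA with hA0 | hA0
  · -- A = 0
    rcases eq_or_lt_of_le (by positivity : (0:ℝ) ≤ lam + β*θ) with hp0 | hp0
    · -- p = 0, so lam = 0 and θ = 0
      have hlam0 : lam = 0 := by nlinarith
      have hθ00 : θ = 0 := by nlinarith
      subst hlam0; subst hθ00
      simp only [neg_zero, ENNReal.rpow_zero, mul_zero, add_zero, one_mul,
        Real.rpow_zero, ENNReal.ofReal_one, sub_zero]
      have hCB : ENNReal.ofReal C ^ (-β) ≤ ENNReal.ofReal B ^ (-β) :=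
        ennrpow_anti (ENNReal.ofReal_le_ofReal hBC) (by linarith)
      refine (mul_le_mul_right hCB _).trans (le_of_eq ?_)
      rw [← ENNReal.rpow_add _ _ (by simp [hB0]) ENNReal.ofReal_ne_top]
      congr 1; ring
    · -- p > 0 : RHS has A-factor = ∞
      have : ENNReal.ofReal A ^ (-(lam + β*θ)) = ⊤ := by
        rw [← hA0, ENNReal.ofReal_zero, ENNReal.zero_rpow_of_neg (by linarith)]
      rw [this, ENNReal.top_mul (by
        rw [ne_eq, ENNReal.rpow_eq_zero_iff, not_or, not_and, not_and]
        constructor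
        · intro h _; rw [ENNReal.ofReal_eq_zero] at h; linarith
        · intro h _; exact ENNReal.ofReal_ne_top h), ENNReal.mul_top (by
          simp only [ne_eq, ENNReal.ofReal_eq_zero, not_le]; positivity)]
      exact le_top
  · -- A, B, C all positive
    have hC0 : 0 < C := lt_of_lt_of_le hB0 hBC
    have key := real_kernel_ineq β lam θ A B C hβ hθ0 hθ1 hlam hA0 hB0 hC0 hBC htri
    calc ENNReal.ofReal A ^ (-lam) * (ENNReal.ofReal B ^ (-β) * ENNReal.ofReal C ^ (-β))
        = ENNReal.ofReal (A ^ (-lam) * (B ^ (-β) * C ^ (-β))) := by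
          rw [ENNReal.ofReal_rpow_of_pos hA0, ENNReal.ofReal_rpow_of_pos hB0,
            ENNReal.ofReal_rpow_of_pos hC0, ← ENNReal.ofReal_mul (Real.rpow_nonneg hB _),
            ← ENNReal.ofReal_mul (Real.rpow_nonneg hA _)]
      _ ≤ ENNReal.ofReal (2 ^ (β*θ) * (A ^ (-(lam + β*θ)) * B ^ (-(β*(2-θ))))) :=
          ENNReal.ofReal_le_ofReal key
      _ = _ := by
          rw [ENNReal.ofReal_mul (by positivity), ENNReal.ofReal_mul (Real.rpow_nonneg hA _),
            ENNReal.ofReal_rpow_of_pos hA0, ENNReal.ofReal_rpow_of_pos hB0]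

lemma meas_T_snd (w : ℝ × ℝ) (t : ℝ) :
    Measurable fun v : ℝ × ℝ => ENNReal.ofReal (torusDist2 w v) ^ t := by
  apply Measurable.pow_const
  apply ENNReal.measurable_ofReal.comp
  exact (continuous_torusDist2.comp (Continuous.prodMk_right w)).measurable

lemma meas_T_fst (w : ℝ × ℝ) (t : ℝ) :
    Measurable fun v : ℝ × ℝ => ENNReal.ofReal (torusDist2 v w) ^ t := by
  apply Measurable.pow_const
  apply ENNReal.measurable_ofReal.comp
  exact (continuous_torusDist2.comp (continuous_id.prodMk continuous_const)).measurable

lemma meas_T_pair (t : ℝ) :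
    Measurable fun p : (ℝ × ℝ) × (ℝ × ℝ) => ENNReal.ofReal (torusDist2 p.1 p.2) ^ t := by
  apply Measurable.pow_const
  apply ENNReal.measurable_ofReal.comp
  exact continuous_torusDist2.measurable

/-- the Case 1/Case 2 integral bound in the proof of Proposition 1.1:
for `0 < α < 2` and `0 ≤ λ` with `λ < 2α` and `λ < 2`, there is `C > 0` such that for
every `x ∈ T²`: `∫_{T²} ∫_{T²} |y−z|^{−λ} |x−y|^{α−2} |x−z|^{α−2} dy dz ≤ C`
(in particular the integral is finite; singular factors are interpreted as `+∞` on
their singular sets, via the `ℝ≥0∞`-valued power). -/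
theorem singular_double_integral_bound (α lam : ℝ) (hα0 : 0 < α) (hα2 : α < 2)
    (hlam0 : 0 ≤ lam) (hlam1 : lam < 2 * α) (hlam2 : lam < 2) :
    ∃ C : ℝ, 0 < C ∧ ∀ x : ℝ × ℝ,
      (∫⁻ y in torusBox, ∫⁻ z in torusBox,
          ENNReal.ofReal (torusDist2 y z) ^ (-lam) *
            (ENNReal.ofReal (torusDist2 x y) ^ (α - 2) *
              ENNReal.ofReal (torusDist2 x z) ^ (α - 2)))
        ≤ ENNReal.ofReal C := by
  set β : ℝ := 2 - α with hβdef
  have hβ0 : 0 < β := by rw [hβdef]; linarith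
  have hβ2 : β < 2 := by rw [hβdef]; linarith
  have hαβ : α - 2 = -β := by rw [hβdef]; ring
  set L : ℝ := (2*β - 2)/β with hL
  set U : ℝ := (2 - lam)/β with hU
  have hLU : L < U := by
    rw [hL, hU]
    exact (div_lt_div_iff_of_pos_right hβ0).mpr (by linarith)
  have hL1 : L < 1 := by
    rw [hL, div_lt_one hβ0]; linarith
  have hU0 : 0 < U := by
    rw [hU]; exact div_pos (by linarith) hβ0
  have hmaxmin : max 0 L < min 1 U :=
    lt_min (max_lt zero_lt_one hL1) (max_lt hU0 hLU)
  set θ : ℝ := (max 0 L + min 1 U) / 2 with hθdef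
  have hθ0 : 0 ≤ θ := by
    have h1 : (0:ℝ) ≤ max 0 L := le_max_left 0 L
    rw [hθdef]; linarith
  have hθ1 : θ ≤ 1 := by
    have h1 : min 1 U ≤ 1 := min_le_left 1 U
    rw [hθdef]; linarith
  have hθL : L < θ := by
    have h1 : L ≤ max 0 L := le_max_right 0 L
    rw [hθdef]; linarith
  have hθU : θ < U := by
    have h1 : min 1 U ≤ U := min_le_right 1 U
    rw [hθdef]; linarith
  set p : ℝ := lam + β*θ with hp
  set q : ℝ := β*(2-θ) with hq
  have hp0 : 0 ≤ p := by rw [hp]; positivity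
  have hp2 : p < 2 := by
    have h1 : β*θ < β*U := by exact (mul_lt_mul_iff_right₀ hβ0).mpr hθU
    have h2 : β*U = 2 - lam := by rw [hU]; field_simp
    rw [hp]; linarith
  have hq0 : 0 ≤ q := by rw [hq]; nlinarith
  have hq2 : q < 2 := by
    have h1 : β*(2-θ) < β*(2-L) := by
      apply (mul_lt_mul_iff_right₀ hβ0).mpr; linarith
    have h2 : β*(2-L) = 2 := by rw [hL]; field_simp; ring
    rw [hq]; linarith
  obtain ⟨Kp, hKpne, hKp⟩ := twoD p hp0 hp2
  obtain ⟨Kq, hKqne, hKq⟩ := twoD q hq0 hq2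
  set c0 : ℝ≥0∞ := ENNReal.ofReal (2 ^ (β*θ)) with hc0
  have hc0ne : c0 ≠ ⊤ := ENNReal.ofReal_ne_top
  set Btot : ℝ≥0∞ := c0 * (Kq * Kp + Kq * Kp) with hBtot
  have hBtotne : Btot ≠ ⊤ := by
    rw [hBtot]
    exact ENNReal.mul_ne_top hc0ne (ENNReal.add_ne_top.mpr
      ⟨ENNReal.mul_ne_top hKqne hKpne, ENNReal.mul_ne_top hKqne hKpne⟩)
  refine ⟨Btot.toReal + 1, by positivity, fun x => ?_⟩
  have hCbound : Btot ≤ ENNReal.ofReal (Btot.toReal + 1) := by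
    conv_lhs => rw [← ENNReal.ofReal_toReal hBtotne]
    exact ENNReal.ofReal_le_ofReal (by linarith)
  refine le_trans ?_ hCbound
  -- pointwise bound
  set T : (ℝ × ℝ) → (ℝ × ℝ) → ℝ≥0∞ := fun a b => ENNReal.ofReal (torusDist2 a b) with hT
  have hpt : ∀ y z : ℝ × ℝ,
      T y z ^ (-lam) * (T x y ^ (α - 2) * T x z ^ (α - 2))
        ≤ c0 * (T x y ^ (-q) * T y z ^ (-p) + T x z ^ (-q) * T y z ^ (-p)) := by
    intro y z
    rw [hαβ]
    have htri : torusDist2 y z ≤ torusDist2 x y + torusDist2 x z := torusDist2_triangle x y z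
    rcases le_total (torusDist2 x y) (torusDist2 x z) with hc | hc
    · have := enn_kernel_aux β lam θ (torusDist2 y z) (torusDist2 x y) (torusDist2 x z)
        hβ0 hθ0 hθ1 hlam0 (torusDist2_nonneg _ _) (torusDist2_nonneg _ _)
        (torusDist2_nonneg _ _) hc htri
      refine this.trans ?_
      rw [show -(lam + β*θ) = -p by rw [hp], show -(β*(2-θ)) = -q by rw [hq]]
      rw [mul_comm (T y z ^ (-p)) (T x y ^ (-q))]
      exact mul_le_mul_right le_self_add c0
    · have := enn_kernel_aux β lam θ (torusDist2 y z) (torusDist2 x z) (torusDist2 x y)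
        hβ0 hθ0 hθ1 hlam0 (torusDist2_nonneg _ _) (torusDist2_nonneg _ _)
        (torusDist2_nonneg _ _) hc (by linarith)
      rw [mul_comm (ENNReal.ofReal (torusDist2 x z) ^ (-β))
        (ENNReal.ofReal (torusDist2 x y) ^ (-β))] at this
      refine this.trans ?_
      rw [show -(lam + β*θ) = -p by rw [hp], show -(β*(2-θ)) = -q by rw [hq]]
      rw [mul_comm (T y z ^ (-p)) (T x z ^ (-q))]
      exact mul_le_mul_right le_add_self c0
  -- integrate
  have step1 : (∫⁻ y in torusBox, ∫⁻ z in torusBox,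
        T y z ^ (-lam) * (T x y ^ (α - 2) * T x z ^ (α - 2)))
      ≤ ∫⁻ y in torusBox, ∫⁻ z in torusBox,
        c0 * (T x y ^ (-q) * T y z ^ (-p) + T x z ^ (-q) * T y z ^ (-p)) :=
    lintegral_mono fun y => lintegral_mono fun z => hpt y z
  refine step1.trans ?_
  have hG2meas : ∀ y : ℝ × ℝ, Measurable fun z : ℝ × ℝ => T x z ^ (-q) * T y z ^ (-p) :=
    fun y => (meas_T_snd x (-q)).mul (meas_T_snd y (-p))
  have step2 : ∀ y : ℝ × ℝ, (∫⁻ z in torusBox,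
        c0 * (T x y ^ (-q) * T y z ^ (-p) + T x z ^ (-q) * T y z ^ (-p)))
      = c0 * (T x y ^ (-q) * (∫⁻ z in torusBox, T y z ^ (-p))
          + (∫⁻ z in torusBox, T x z ^ (-q) * T y z ^ (-p))) := by
    intro y
    rw [lintegral_const_mul' c0 _ hc0ne,
      lintegral_add_left (((meas_T_snd y (-p)).const_mul _)),
      lintegral_const_mul _ (meas_T_snd y (-p))]
  simp_rw [step2]
  have step3 : ∀ y : ℝ × ℝ,
      c0 * (T x y ^ (-q) * (∫⁻ z in torusBox, T y z ^ (-p))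
          + (∫⁻ z in torusBox, T x z ^ (-q) * T y z ^ (-p)))
      ≤ c0 * (T x y ^ (-q) * Kp
          + (∫⁻ z in torusBox, T x z ^ (-q) * T y z ^ (-p))) := by
    intro y
    exact mul_le_mul_right (add_le_add_left (mul_le_mul_right (hKp y) _) _) c0
  refine (lintegral_mono step3).trans ?_
  -- swap the double integral of G2
  have hswap : (∫⁻ y in torusBox, ∫⁻ z in torusBox, T x z ^ (-q) * T y z ^ (-p))
      = ∫⁻ z in torusBox, ∫⁻ y in torusBox, T x z ^ (-q) * T y z ^ (-p) := by
    apply lintegral_lintegral_swap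
    exact ((meas_T_snd x (-q)).comp measurable_snd).mul ((meas_T_pair (-p)).comp
      ((measurable_fst.prodMk measurable_snd))) |>.aemeasurable
  have hinner_y : ∀ z : ℝ × ℝ, (∫⁻ y in torusBox, T y z ^ (-p)) ≤ Kp := by
    intro z
    have : (∫⁻ y in torusBox, T y z ^ (-p)) = ∫⁻ y in torusBox, T z y ^ (-p) := by
      refine lintegral_congr fun y => ?_
      rw [show T y z = T z y from congrArg ENNReal.ofReal (torusDist2_symm y z)]
    rw [this]
    exact hKp z
  have hG2bound : (∫⁻ y in torusBox, ∫⁻ z in torusBox, T x z ^ (-q) * T y z ^ (-p)) ≤ Kq * Kp := by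
    rw [hswap]
    calc (∫⁻ z in torusBox, ∫⁻ y in torusBox, T x z ^ (-q) * T y z ^ (-p))
        = ∫⁻ z in torusBox, T x z ^ (-q) * (∫⁻ y in torusBox, T y z ^ (-p)) := by
          refine lintegral_congr fun z => ?_
          exact lintegral_const_mul _ ((meas_T_fst z (-p)))
      _ ≤ ∫⁻ z in torusBox, T x z ^ (-q) * Kp :=
          lintegral_mono fun z => mul_le_mul_right (hinner_y z) _
      _ = (∫⁻ z in torusBox, T x z ^ (-q)) * Kp :=
          lintegral_mul_const' Kp _ hKpne
      _ ≤ Kq * Kp := mul_le_mul_left (hKq x) Kp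
  calc (∫⁻ y in torusBox, c0 * (T x y ^ (-q) * Kp
          + (∫⁻ z in torusBox, T x z ^ (-q) * T y z ^ (-p))))
      = c0 * ((∫⁻ y in torusBox, T x y ^ (-q) * Kp)
          + ∫⁻ y in torusBox, ∫⁻ z in torusBox, T x z ^ (-q) * T y z ^ (-p)) := by
        rw [lintegral_const_mul' c0 _ hc0ne,
          lintegral_add_left ((meas_T_snd x (-q)).mul_const Kp)]
    _ ≤ c0 * (Kq * Kp + Kq * Kp) := by
        refine mul_le_mul_right (add_le_add ?_ hG2bound) c0
        rw [lintegral_mul_const' Kp _ hKpne]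
        exact mul_le_mul_left (hKq x) Kp
    _ = Btot := by rw [hBtot]
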